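/- Let p_k(z) = z · Σ_{i=0}^k (1−z²)^i · Π_{j=1}^i (2j−1)/(2j). If z ∈ [−1,1] with |z| ≥ η > 0 and k ≥ (1/η²)·ln(2/ε₁), then |sgn(z) − p_k(z)| ≤ ε₁/2. -/

import Mathlib

open Finset Real


noncomputable def cc (i : ℕ) : ℝ := ∏ j ∈ Finset.Icc 1 i, ((2 * (j : ℝ) - 1) / (2 * j))

lemma cc_zero : cc 0 = 1 := by simp [cc]

lemma cc_succ (i : ℕ) : cc (i+1) = cc i * ((2*(i:ℝ)+1) / (2*i+2)) := by
  rw [cc, cc, Finset.prod_Icc_succ_top (by omega)]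
  push_cast
  congr 1 <;> ring

lemma cc_pos (i : ℕ) : 0 < cc i := by
  apply Finset.prod_pos
  intro j hj
  simp only [Finset.mem_Icc] at hj
  have h1 : (1:ℝ) ≤ (j:ℝ) := by exact_mod_cast hj.1
  have : (0:ℝ) < 2 * j - 1 := by linarith
  have : (0:ℝ) < 2 * j := by linarith
  positivity

lemma cc_sq (i : ℕ) : (2*(i:ℝ)+1) * (cc i)^2 ≤ 1 := by
  induction i with
  | zero => simp [cc_zero]
  | succ n ih =>
    rw [cc_succ]
    have hp := cc_pos n
    have h1 : (0:ℝ) < 2*(n:ℝ)+2 := by positivity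
    push_cast
    have key : (2*((n:ℝ)+1)+1) * ((2*(n:ℝ)+1)^2/(2*(n:ℝ)+2)^2) ≤ (2*(n:ℝ)+1) := by
      rw [mul_div_assoc', div_le_iff₀ (by positivity)]
      nlinarith [sq_nonneg ((n:ℝ))]
    rw [mul_pow, div_pow]
    nlinarith [key, sq_nonneg (cc n), mul_pos hp hp]

lemma sum_deriv (k : ℕ) (t : ℝ) :
    ∑ i ∈ Finset.range (k+1), cc i * ((1-t^2)^i - 2*t^2*(i:ℝ)*(1-t^2)^(i-1)) =
      (2*(k:ℝ)+1) * cc k * (1-t^2)^k := by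
  induction k with
  | zero => simp [cc_zero]
  | succ n ih =>
    rw [Finset.sum_range_succ, ih, cc_succ]
    simp only [Nat.add_sub_cancel]
    have h1 : (0:ℝ) < 2*(n:ℝ)+2 := by positivity
    push_cast
    rw [pow_succ]
    field_simp
    ring

lemma hasDerivAt_P (k : ℕ) (t : ℝ) :
    HasDerivAt (fun v : ℝ => v * ∑ i ∈ Finset.range (k+1), (1-v^2)^i * cc i)
      ((2*(k:ℝ)+1) * cc k * (1-t^2)^k) t := by
  have hinner : HasDerivAt (fun v : ℝ => 1 - v^2) (-(2*t)) t := by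
    have := (hasDerivAt_pow 2 t).const_sub 1
    norm_num at this
    convert this using 1
  have hsum : HasDerivAt (fun v : ℝ => ∑ i ∈ Finset.range (k+1), (1-v^2)^i * cc i)
      (∑ i ∈ Finset.range (k+1), ((i:ℝ) * (1-t^2)^(i-1) * (-(2*t))) * cc i) t := by
    apply HasDerivAt.fun_sum
    intro i _
    exact (hinner.pow i).mul_const (cc i)
  have hmul := (hasDerivAt_id t).fun_mul hsum
  convert hmul using 1
  · rfl
  · rfl
  · rfl
  simp only [id_eq, one_mul]
  rw [← sum_deriv k t, Finset.mul_sum, ← Finset.sum_add_distrib]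
  refine Finset.sum_congr rfl fun i _ => by ring

lemma hasDerivAt_Q (k : ℕ) (v : ℝ) (hv : v ≠ 0) :
    HasDerivAt (fun w : ℝ => (1-w^2)^(k+1) / (2*((k:ℝ)+1)*w))
      (-(1-v^2)^k - (1-v^2)^(k+1) / (2*((k:ℝ)+1)*v^2)) v := by
  have hinner : HasDerivAt (fun w : ℝ => 1 - w^2) (-(2*v)) v := by
    have := (hasDerivAt_pow 2 v).const_sub 1
    norm_num at this
    convert this using 1
  have hnum : HasDerivAt (fun w : ℝ => (1-w^2)^(k+1))
      (((k:ℝ)+1) * (1-v^2)^k * (-(2*v))) v := by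
    have := hinner.fun_pow (k+1)
    simp only [Nat.add_sub_cancel] at this
    convert this using 2
    · rfl
    · rfl
    push_cast
    ring
  have hden : HasDerivAt (fun w : ℝ => 2*((k:ℝ)+1)*w) (2*((k:ℝ)+1)) v := by
    simpa using (hasDerivAt_id v).const_mul (2*((k:ℝ)+1))
  have hd := hnum.fun_div hden (by positivity)
  convert hd using 1
  · rfl
  · rfl
  have hk0 : ((k:ℝ)+1) ≠ 0 := by positivity
  field_simp

lemma P_one (k : ℕ) : (1:ℝ) * ∑ i ∈ Finset.range (k+1), (1-(1:ℝ)^2)^i * cc i = 1 := by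
  rw [one_mul, Finset.sum_eq_single_of_mem 0 (Finset.mem_range.2 (Nat.succ_pos k))]
  · simp [cc_zero]
  · intro i _ hi
    have : (1:ℝ) - 1^2 = 0 := by norm_num
    simp [this, zero_pow hi]

lemma key_bound (k : ℕ) (t : ℝ) (ht0 : 0 < t) (ht1 : t ≤ 1) :
    0 ≤ 1 - t * ∑ i ∈ Finset.range (k+1), (1-t^2)^i * cc i ∧
    1 - t * ∑ i ∈ Finset.range (k+1), (1-t^2)^i * cc i ≤
      (2*(k:ℝ)+1) * cc k * ((1-t^2)^(k+1) / (2*((k:ℝ)+1)*t)) := by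
  set P : ℝ → ℝ := fun v => v * ∑ i ∈ Finset.range (k+1), (1-v^2)^i * cc i with hP
  have hccp := cc_pos k
  constructor
  · -- P t ≤ P 1 = 1
    have hmono : MonotoneOn P (Set.Icc t 1) := by
      apply monotoneOn_of_deriv_nonneg (convex_Icc t 1)
      · exact fun v _ => ((hasDerivAt_P k v).continuousAt).continuousWithinAt
      · intro v _
        exact ((hasDerivAt_P k v).differentiableAt).differentiableWithinAt
      · intro v hv
        rw [interior_Icc, Set.mem_Ioo] at hv
        rw [(hasDerivAt_P k v).deriv]
        have h1 : (0:ℝ) ≤ 1 - v^2 := by nlinarith [hv.1, hv.2]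
        positivity
    have hle := hmono (Set.mem_Icc.2 ⟨le_refl t, ht1⟩) (Set.mem_Icc.2 ⟨ht1, le_refl 1⟩) ht1
    have h1 : P 1 = 1 := P_one k
    simp only [hP] at hle h1
    rw [h1] at hle
    linarith
  · -- upper bound via H
    set C : ℝ := (2*(k:ℝ)+1) * cc k with hC
    have hCpos : 0 < C := by positivity
    set H : ℝ → ℝ := fun v => P v + C * ((1-v^2)^(k+1) / (2*((k:ℝ)+1)*v)) with hH
    have hderiv : ∀ v : ℝ, v ≠ 0 → HasDerivAt H
        (C * (-(1-v^2)^(k+1) / (2*((k:ℝ)+1)*v^2))) v := by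
      intro v hv
      have := (hasDerivAt_P k v).fun_add ((hasDerivAt_Q k v hv).const_mul C)
      convert this using 1
      · rfl
      · rfl
      have hk0 : ((k:ℝ)+1) ≠ 0 := by positivity
      field_simp
      ring
    have hanti : AntitoneOn H (Set.Icc t 1) := by
      apply antitoneOn_of_deriv_nonpos (convex_Icc t 1)
      · intro v hv
        rw [Set.mem_Icc] at hv
        exact ((hderiv v (by linarith)).continuousAt).continuousWithinAt
      · intro v hv
        rw [interior_Icc, Set.mem_Ioo] at hv
        exact ((hderiv v (by linarith [hv.1])).differentiableAt).differentiableWithinAt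
      · intro v hv
        rw [interior_Icc, Set.mem_Ioo] at hv
        have hv0 : (0:ℝ) < v := lt_trans ht0 hv.1
        rw [(hderiv v (ne_of_gt hv0)).deriv]
        have h1 : (0:ℝ) ≤ 1 - v^2 := by nlinarith [hv.2]
        have h2 : (0:ℝ) ≤ (1-v^2)^(k+1) := by positivity
        have h3 : (0:ℝ) < 2*((k:ℝ)+1)*v^2 := by positivity
        have := div_nonneg h2 (le_of_lt h3)
        have : C * (-(1-v^2)^(k+1) / (2*((k:ℝ)+1)*v^2)) = -(C * ((1-v^2)^(k+1) / (2*((k:ℝ)+1)*v^2))) := by ring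
        rw [this]
        simp only [neg_nonpos]
        positivity
      
    have hle := hanti (Set.mem_Icc.2 ⟨le_refl t, ht1⟩) (Set.mem_Icc.2 ⟨ht1, le_refl 1⟩) ht1
    have h1 : H 1 = 1 := by
      have hp1 : P 1 = 1 := P_one k
      simp only [hH]
      have h0 : (1:ℝ) - 1^2 = 0 := by norm_num
      rw [h0, zero_pow (Nat.succ_ne_zero k), hp1]
      simp
    rw [h1] at hle
    simp only [hH, hP] at hle
    linarith

set_option maxHeartbeats 1000000 in
/-- for `p_k(z) = z ∑_{i=0}^k (1-z²)^i ∏_{j=1}^i (2j-1)/(2j)`,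
if `z ∈ [-1,1]`, `|z| ≥ η > 0` and `k ≥ (1/η²) ln(2/ε₁)`, then
`|sgn(z) - p_k(z)| ≤ ε₁/2`. -/
theorem sign_poly_approx (η ε₁ : ℝ) (hη : η ∈ Set.Ioo (0 : ℝ) 1)
    (hε₁ : ε₁ ∈ Set.Ioo (0 : ℝ) 1) (k : ℕ) (hk : 1 ≤ k)
    (hkbig : (1 / η ^ 2) * Real.log (2 / ε₁) ≤ (k : ℝ))
    (z : ℝ) (hz : z ∈ Set.Icc (-1 : ℝ) 1) (hzη : η ≤ |z|) :
    |Real.sign z -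
        z * ∑ i ∈ Finset.range (k + 1),
          (1 - z ^ 2) ^ i * ∏ j ∈ Finset.Icc 1 i, ((2 * (j : ℝ) - 1) / (2 * j))|
      ≤ ε₁ / 2 := by
  obtain ⟨hη0, hη1⟩ := hη
  obtain ⟨hε0, hε1⟩ := hε₁
  obtain ⟨hzl, hzr⟩ := hz
  have hk1 : (1:ℝ) ≤ (k:ℝ) := by exact_mod_cast hk
  set t : ℝ := |z| with htdef
  have ht0 : 0 < t := lt_of_lt_of_le hη0 hzη
  have ht1 : t ≤ 1 := abs_le.2 ⟨hzl, hzr⟩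
  have hz0 : z ≠ 0 := by
    intro h
    rw [htdef, h, abs_zero] at ht0
    exact lt_irrefl 0 ht0
  have hsq : z^2 = t^2 := (sq_abs z).symm
  have hgoal : (∑ i ∈ Finset.range (k + 1),
      (1 - z ^ 2) ^ i * ∏ j ∈ Finset.Icc 1 i, ((2 * (j : ℝ) - 1) / (2 * j))) =
      ∑ i ∈ Finset.range (k+1), (1-t^2)^i * cc i := by
    rw [hsq]
    unfold cc
    rfl
  rw [hgoal]
  set S := ∑ i ∈ Finset.range (k+1), (1-t^2)^i * cc i with hS
  have hzt : Real.sign z * t = z := by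
    rcases lt_or_gt_of_ne hz0 with h | h
    · rw [Real.sign_of_neg h, htdef, abs_of_neg h]; ring
    · rw [Real.sign_of_pos h, htdef, abs_of_pos h]; ring
  have hsplit : Real.sign z - z * S = Real.sign z * (1 - t * S) := by
    rw [mul_sub, mul_one, ← mul_assoc, hzt]
  rw [hsplit, abs_mul]
  have habs1 : |Real.sign z| = 1 := by
    rcases lt_or_gt_of_ne hz0 with h | h
    · rw [Real.sign_of_neg h]; norm_num
    · rw [Real.sign_of_pos h]; norm_num
  rw [habs1, one_mul]
  obtain ⟨hlow, hup⟩ := key_bound k t ht0 ht1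
  rw [abs_of_nonneg hlow]
  refine hup.trans ?_
  clear_value S t
  clear hS hgoal hsplit habs1 hzt hlow hup hsq hz0 htdef
  -- numeric bound
  have hη2 : (0:ℝ) < η^2 := by positivity
  have hL : Real.log (2/ε₁) ≤ (k:ℝ) * η^2 := by
    have h := mul_le_mul_of_nonneg_left hkbig hη2.le
    rw [← mul_assoc, mul_one_div, div_self (ne_of_gt hη2), one_mul] at h
    linarith
  have hexp : Real.exp (-((k:ℝ)*η^2)) ≤ ε₁/2 := by
    have h2 : (0:ℝ) < ε₁/2 := by linarith
    rw [show ε₁/2 = Real.exp (Real.log (ε₁/2)) from (Real.exp_log h2).symm]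
    apply Real.exp_le_exp.2
    rw [show Real.log (ε₁/2) = -Real.log (2/ε₁) by rw [← Real.log_inv, inv_div]]
    linarith
  have htη2 : η^2 ≤ t^2 := by nlinarith
  have hpow : (1-t^2)^(k+1) ≤ ε₁/2 * Real.exp (-η^2) := by
    have h1 : (0:ℝ) ≤ 1 - t^2 := by nlinarith
    have h2 : (1:ℝ) - η^2 ≤ Real.exp (-η^2) := by
      have := Real.add_one_le_exp (-η^2)
      linarith
    calc (1-t^2)^(k+1) ≤ (1-η^2)^(k+1) := pow_le_pow_left₀ h1 (by linarith) _
      _ ≤ (Real.exp (-η^2))^(k+1) := pow_le_pow_left₀ (by nlinarith) h2 _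
      _ = Real.exp (-((k:ℝ)*η^2)) * Real.exp (-η^2) := by
          rw [← Real.exp_nat_mul, ← Real.exp_add]
          congr 1
          push_cast
          ring
      _ ≤ ε₁/2 * Real.exp (-η^2) :=
          mul_le_mul_of_nonneg_right hexp (Real.exp_nonneg _)
  have hln2 : Real.log 2 ≤ (k:ℝ) * η^2 := by
    refine le_trans ?_ hL
    apply Real.log_le_log (by norm_num)
    rw [le_div_iff₀ hε0]
    nlinarith
  have h2k : (1:ℝ) ≤ 2*(k:ℝ)*η^2 := by
    linarith [Real.log_two_gt_d9, hln2]
  have hmid : 2*(k:ℝ)+1 ≤ (2*((k:ℝ)+1))^2 * η^2 := by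
    nlinarith [mul_nonneg (sub_nonneg.2 h2k) (sq_nonneg ((k:ℝ)+1)), hk1, hη0]
  have hcck : (2*(k:ℝ)+1) * cc k ≤ 2*((k:ℝ)+1)*η := by
    have hA := cc_sq k
    have hB := cc_pos k
    have hsq2 : ((2*(k:ℝ)+1)*cc k)^2 ≤ (2*((k:ℝ)+1)*η)^2 := by nlinarith
    have ha : (0:ℝ) < (2*(k:ℝ)+1)*cc k := by positivity
    have hb : (0:ℝ) < 2*((k:ℝ)+1)*η := by positivity
    exact (pow_le_pow_iff_left₀ ha.le hb.le two_ne_zero).1 hsq2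
  have e1 : Real.exp (-η^2) ≤ 1 := by
    rw [Real.exp_le_one_iff]
    nlinarith
  have hte : η * Real.exp (-η^2) ≤ t := by nlinarith [Real.exp_nonneg (-η^2)]
  have hBnum : (2*(k:ℝ)+1) * cc k * (1-t^2)^(k+1) ≤ ε₁/2 * (2*((k:ℝ)+1)*t) := by
    have hc1 : (0:ℝ) ≤ (2*(k:ℝ)+1) * cc k :=
      mul_nonneg (by positivity) (cc_pos k).le
    calc (2*(k:ℝ)+1) * cc k * (1-t^2)^(k+1)
        ≤ (2*(k:ℝ)+1) * cc k * (ε₁/2 * Real.exp (-η^2)) :=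
          mul_le_mul_of_nonneg_left hpow hc1
      _ ≤ (2*((k:ℝ)+1)*η) * (ε₁/2 * Real.exp (-η^2)) :=
          mul_le_mul_of_nonneg_right hcck (by positivity)
      _ ≤ ε₁/2 * (2*((k:ℝ)+1)*t) := by
          have := mul_le_mul_of_nonneg_left hte
            (show (0:ℝ) ≤ ε₁ * ((k:ℝ)+1) by positivity)
          nlinarith
  rw [mul_div_assoc', div_le_iff₀ (by positivity)]
  exact hBnum
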